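/- arXiv:cond-mat/0007425 — 3 statements merged into one kernel-verified Lean document; each statement's English description precedes it below -/
import Mathlib

section
/- Let A be an N×N Hermitian matrix and for k = 0,…,N−1 let Aᵏ denote the matrix consisting of the k-th supra- and infra-diagonals of A (entries a_{i,i+k} and a_{i+k,i}, zero elsewhere). Let ψ ∈ ℂᴺ be a unit vector, set d_k = ⟨ψ, Aᵏ ψ⟩ and λ = ⟨ψ, A ψ⟩ = Σ_k d_k. Then for any positive integer M ≤ N there exists n ∈ [0, N−M] and a unit vector φ ∈ ℂᴺ supported on indices n+1,…,n+M such that ⟨φ, A φ⟩ ≤ λ + (C/M²) Σ_{k=1}^{M−1} k² |d_k| + C Σ_{k=M}^{N−1} |d_k|, where C > 0 is a universal constant. -/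
open Finset

namespace LocAux

def ff (M : ℕ) (t : ℤ) : ℤ := max 0 (min (t + 1) ((M : ℤ) - t))

noncomputable def fr (M : ℕ) (t : ℤ) : ℝ := ((ff M t : ℤ) : ℝ)

lemma fr_nonneg (M : ℕ) (t : ℤ) : 0 ≤ fr M t := by
  unfold fr; exact_mod_cast le_max_left _ _

lemma fr_eq_zero {M : ℕ} {t : ℤ} (h : t < 0 ∨ (M:ℤ) ≤ t) : fr M t = 0 := by
  unfold fr ff
  norm_cast
  omega

lemma fr_ne_zero {M : ℕ} {t : ℤ} (h : fr M t ≠ 0) : 0 ≤ t ∧ t < (M:ℤ) := by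
  by_contra hc
  exact h (fr_eq_zero (by omega))

lemma fr_sub_sq_le (M : ℕ) (t k : ℤ) : (fr M t - fr M (t + k))^2 ≤ (k:ℝ)^2 := by
  unfold fr ff
  have h : (max 0 (min (t+1) ((M:ℤ) - t)) - max 0 (min (t+k+1) ((M:ℤ) - (t+k))))^2 ≤ k^2 := by
    have h1 : max 0 (min (t+1) ((M:ℤ) - t)) - max 0 (min (t+k+1) ((M:ℤ) - (t+k))) ≤ |k| ∧
        -|k| ≤ max 0 (min (t+1) ((M:ℤ) - t)) - max 0 (min (t+k+1) ((M:ℤ) - (t+k))) := by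
      rcases abs_cases k with ⟨h,h'⟩|⟨h,h'⟩ <;> omega
    nlinarith [h1.1, h1.2, abs_nonneg k, sq_abs k]
  calc (((max 0 (min (t+1) ((M:ℤ) - t)) : ℤ):ℝ) - ((max 0 (min (t+k+1) ((M:ℤ) - (t+k))) : ℤ):ℝ))^2
      = (((max 0 (min (t+1) ((M:ℤ) - t)) - max 0 (min (t+k+1) ((M:ℤ) - (t+k))) : ℤ) : ℝ))^2 := by
        push_cast; ring
    _ ≤ (k:ℝ)^2 := by exact_mod_cast h

/-- sums of a function vanishing off `S ∩ T` agree on `S` and `T`. -/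
lemma sum_congr_supp {g : ℤ → ℝ} {S T : Finset ℤ}
    (h : ∀ t, g t ≠ 0 → (t ∈ S ↔ t ∈ T)) : ∑ t ∈ S, g t = ∑ t ∈ T, g t := by
  have h1 : ∑ t ∈ S, g t = ∑ t ∈ S ∩ T, g t := by
    apply (Finset.sum_subset Finset.inter_subset_left ?_).symm
    intro t hS htST
    by_contra hne
    exact htST (Finset.mem_inter.mpr ⟨hS, (h t hne).mp hS⟩)
  have h2 : ∑ t ∈ T, g t = ∑ t ∈ S ∩ T, g t := by
    apply (Finset.sum_subset Finset.inter_subset_right ?_).symm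
    intro t hT htST
    by_contra hne
    exact htST (Finset.mem_inter.mpr ⟨(h t hne).mpr hT, hT⟩)
  rw [h1, h2]

lemma sum_shift (g : ℤ → ℝ) (c a b : ℤ) :
    ∑ t ∈ Icc a b, g (t + c) = ∑ t ∈ Icc (a+c) (b+c), g t := by
  rw [← Finset.map_add_right_Icc a b c, Finset.sum_map]
  rfl

lemma sum_reflect (g : ℤ → ℝ) (i a b : ℤ) :
    ∑ n ∈ Icc a b, g (i - n) = ∑ t ∈ Icc (i-b) (i-a), g t := by
  apply Finset.sum_nbij' (fun n => i - n) (fun t => i - t) <;>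
    intros <;> simp_all [Finset.mem_Icc] <;> omega

noncomputable def gam (M : ℕ) (k : ℤ) : ℝ :=
  ∑ t ∈ Icc (0:ℤ) ((M:ℤ)-1), fr M t * fr M (t+k)

lemma gam_nonneg (M : ℕ) (k : ℤ) : 0 ≤ gam M k :=
  Finset.sum_nonneg fun t _ => mul_nonneg (fr_nonneg M t) (fr_nonneg M _)

lemma gam_eq_zero {M : ℕ} {k : ℤ} (h : (M:ℤ) ≤ k) : gam M k = 0 := by
  apply Finset.sum_eq_zero
  intro t ht
  simp only [Finset.mem_Icc] at ht
  rw [fr_eq_zero (M := M) (t := t + k) (by omega)]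
  ring

lemma gam_neg (M : ℕ) (k : ℤ) : gam M (-k) = gam M k := by
  unfold gam
  have h1 : ∑ t ∈ Icc (0:ℤ) ((M:ℤ)-1), fr M t * fr M (t + -k)
      = ∑ t ∈ Icc (0:ℤ) ((M:ℤ)-1), (fun s => fr M (s + k) * fr M s) (t + -k) := by
    apply Finset.sum_congr rfl
    intro t _
    show fr M t * fr M (t + -k) = fr M (t + -k + k) * fr M (t + -k)
    rw [show t + -k + k = t by ring]
  rw [h1, sum_shift (fun s => fr M (s + k) * fr M s) (-k) 0 ((M:ℤ)-1),
    show (∑ t ∈ Icc (0:ℤ) ((M:ℤ)-1), fr M t * fr M (t+k))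
      = ∑ t ∈ Icc (0:ℤ) ((M:ℤ)-1), fr M (t+k) * fr M t from
      Finset.sum_congr rfl (fun t _ => mul_comm _ _)]
  apply sum_congr_supp
  intro t ht
  simp only [ne_eq, mul_eq_zero, not_or] at ht
  have h2 := fr_ne_zero ht.2
  have h3 := fr_ne_zero ht.1
  simp only [Finset.mem_Icc]
  omega

lemma gam0_lb (M : ℕ) (hM : 0 < M) : (M:ℝ)^3/64 ≤ gam M 0 := by
  have hsub : Icc ((M:ℤ)/4) ((M:ℤ)/2) ⊆ Icc (0:ℤ) ((M:ℤ)-1) := by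
    intro t ht; simp only [Finset.mem_Icc] at *; omega
  have h1 : ∑ t ∈ Icc ((M:ℤ)/4) ((M:ℤ)/2), fr M t * fr M (t+0) ≤ gam M 0 :=
    Finset.sum_le_sum_of_subset_of_nonneg hsub
      (fun t _ _ => mul_nonneg (fr_nonneg _ _) (fr_nonneg _ _))
  have h2 : ∀ t ∈ Icc ((M:ℤ)/4) ((M:ℤ)/2), ((M:ℝ)^2/16) ≤ fr M t * fr M (t+0) := by
    intro t ht; simp only [Finset.mem_Icc] at ht
    have hf : (M:ℤ) ≤ 4 * ff M t := by unfold ff; omega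
    have hf' : (M:ℝ) ≤ 4 * fr M t := by unfold fr; exact_mod_cast hf
    rw [add_zero]
    nlinarith [fr_nonneg M t]
  have h3 := Finset.card_nsmul_le_sum _ _ _ h2
  have hcard : (M:ℝ) ≤ 4 * ((Icc ((M:ℤ)/4) ((M:ℤ)/2)).card : ℝ) := by
    rw [Int.card_Icc]
    have : (M:ℤ) ≤ 4 * (((M:ℤ)/2 + 1 - (M:ℤ)/4).toNat : ℤ) := by omega
    exact_mod_cast this
  rw [nsmul_eq_mul] at h3
  nlinarith [sq_nonneg (M:ℝ), h3, h1]

lemma gam_diff (M : ℕ) (k : ℤ) (hk : 0 ≤ k) :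
    gam M k ≤ gam M 0 ∧ gam M 0 - gam M k ≤ ((M:ℝ) + k) * k^2 / 2 := by
  set I : Finset ℤ := Icc (-k) ((M:ℤ)-1) with hI
  have hg0 : gam M 0 = ∑ t ∈ Icc (0:ℤ) ((M:ℤ)-1), fr M t * fr M t := by
    apply Finset.sum_congr rfl; intro t _; rw [add_zero]
  have e1 : ∑ t ∈ I, fr M t * fr M t = gam M 0 := by
    rw [hg0]
    apply sum_congr_supp
    intro t ht
    have h2 : fr M t ≠ 0 := fun h => ht (by rw [h]; ring)
    have h3 := fr_ne_zero h2
    simp only [hI, Finset.mem_Icc]; omega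
  have e2 : ∑ t ∈ I, fr M (t+k) * fr M (t+k) = gam M 0 := by
    rw [hI, sum_shift (fun s => fr M s * fr M s) k (-k) ((M:ℤ)-1), hg0]
    apply sum_congr_supp
    intro t ht
    have h2 : fr M t ≠ 0 := fun h => ht (by rw [h]; ring)
    have h3 := fr_ne_zero h2
    simp only [Finset.mem_Icc]; omega
  have e3 : ∑ t ∈ I, fr M t * fr M (t+k) = gam M k := by
    apply sum_congr_supp
    intro t ht
    have h2 : fr M t ≠ 0 := fun h => ht (by rw [h]; ring)
    have h3 := fr_ne_zero h2
    simp only [hI, Finset.mem_Icc]; omega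
  have key : ∑ t ∈ I, (fr M t - fr M (t+k))^2 = 2*(gam M 0 - gam M k) := by
    have : ∀ t ∈ I, (fr M t - fr M (t+k))^2
        = fr M t * fr M t + fr M (t+k) * fr M (t+k) - 2*(fr M t * fr M (t+k)) := by
      intro t _; ring
    rw [Finset.sum_congr rfl this, Finset.sum_sub_distrib, Finset.sum_add_distrib,
      ← Finset.mul_sum, e1, e2, e3]
    ring
  have hnn : 0 ≤ ∑ t ∈ I, (fr M t - fr M (t+k))^2 :=
    Finset.sum_nonneg fun t _ => sq_nonneg _
  have hub : ∑ t ∈ I, (fr M t - fr M (t+k))^2 ≤ ((M:ℝ) + k) * k^2 := by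
    calc ∑ t ∈ I, (fr M t - fr M (t+k))^2 ≤ ∑ _t ∈ I, (k:ℝ)^2 :=
          Finset.sum_le_sum fun t _ => fr_sub_sq_le M t k
      _ = (I.card : ℝ) * (k:ℝ)^2 := by rw [Finset.sum_const, nsmul_eq_mul]
      _ ≤ ((M:ℝ) + k) * k^2 := by
          apply mul_le_mul_of_nonneg_right _ (sq_nonneg _)
          rw [hI, Int.card_Icc]
          have : ((((M:ℤ) - 1) + 1 - (-k)).toNat : ℤ) ≤ (M:ℤ) + k := by omega
          exact_mod_cast this
  constructor
  · linarith
  · linarith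

lemma colsum (M N : ℕ) (i c : ℤ) (hi : 0 ≤ i) (hi' : i ≤ (N:ℤ)-1) :
    ∑ n ∈ Icc (1 - (M:ℤ)) ((N:ℤ)-1), fr M (i - n) * fr M (i - n + c) = gam M c := by
  have h := sum_reflect (fun t => fr M t * fr M (t + c)) i (1 - (M:ℤ)) ((N:ℤ)-1)
  rw [h]
  apply sum_congr_supp
  intro t ht
  have h2 : fr M t ≠ 0 := fun hz => ht (by rw [hz]; ring)
  have h3 := fr_ne_zero h2
  simp only [Finset.mem_Icc]
  omega

lemma total (M N : ℕ) (c : Fin N → Fin N → ℝ) :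
    ∑ n ∈ Icc (1 - (M:ℤ)) ((N:ℤ)-1),
        ∑ i : Fin N, ∑ j : Fin N, fr M ((i:ℤ) - n) * fr M ((j:ℤ) - n) * c i j
      = ∑ i : Fin N, ∑ j : Fin N, gam M ((j:ℤ) - (i:ℤ)) * c i j := by
  rw [Finset.sum_comm]
  apply Finset.sum_congr rfl; intro i _
  rw [Finset.sum_comm]
  apply Finset.sum_congr rfl; intro j _
  rw [← Finset.sum_mul,
    show (∑ n ∈ Icc (1 - (M:ℤ)) ((N:ℤ)-1), fr M ((i:ℤ) - n) * fr M ((j:ℤ) - n))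
      = ∑ n ∈ Icc (1 - (M:ℤ)) ((N:ℤ)-1), fr M ((i:ℤ) - n) * fr M ((i:ℤ) - n + ((j:ℤ) - (i:ℤ)))
      from Finset.sum_congr rfl (fun n _ => by
        rw [show (i:ℤ) - n + ((j:ℤ) - (i:ℤ)) = (j:ℤ) - n by ring]),
    colsum M N (i:ℤ) ((j:ℤ) - (i:ℤ)) (by exact_mod_cast Nat.zero_le _) (by
      have := i.isLt; omega)]

lemma regroup (M N : ℕ) (v : ℤ → ℝ) (hv : ∀ k : ℤ, v (-k) = v k) (c : Fin N → Fin N → ℝ) :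
    ∑ i : Fin N, ∑ j : Fin N, v ((j:ℤ) - (i:ℤ)) * c i j
    = ∑ k ∈ Finset.range N, v (k:ℤ) *
        ∑ i : Fin N, ∑ j : Fin N,
          (if (i : ℕ) + k = (j : ℕ) ∨ (j : ℕ) + k = (i : ℕ) then c i j else 0) := by
  simp_rw [Finset.mul_sum]
  symm
  rw [Finset.sum_comm]
  apply Finset.sum_congr rfl; intro i _
  rw [Finset.sum_comm]
  apply Finset.sum_congr rfl; intro j _
  rw [Finset.sum_eq_single_of_mem (((j:ℤ) - (i:ℤ)).natAbs)]
  · rw [if_pos (by omega)]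
    congr 1
    rcases le_or_gt ((i:ℤ)) ((j:ℤ)) with h | h
    · congr 1; omega
    · rw [show ((((j:ℤ) - (i:ℤ)).natAbs : ℕ) : ℤ) = -((j:ℤ) - (i:ℤ)) by omega, hv]
  · simp only [Finset.mem_range]
    have hi := i.isLt
    have hj := j.isLt
    omega
  · intro b _ hb
    rw [if_neg (by omega)]
    rw [mul_zero]

variable {N : ℕ} (A : Matrix (Fin N) (Fin N) ℂ) (ψ : Fin N → ℂ)

lemma dot_re : (dotProduct (star ψ) (A.mulVec ψ)).re
    = ∑ i, ∑ j, ((starRingEnd ℂ) (ψ i) * A i j * ψ j).re := by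
  simp only [dotProduct, Matrix.mulVec, Pi.star_apply, Complex.star_def,
    Finset.mul_sum, Complex.re_sum]
  apply Finset.sum_congr rfl; intro i _
  apply Finset.sum_congr rfl; intro j _
  ring_nf

lemma dk_re (k : ℕ) :
    (dotProduct (star ψ) ((Matrix.of fun i j : Fin N =>
      if (i : ℕ) + k = (j : ℕ) ∨ (j : ℕ) + k = (i : ℕ) then A i j else 0).mulVec ψ)).re
    = ∑ i : Fin N, ∑ j : Fin N, (if (i : ℕ) + k = (j : ℕ) ∨ (j : ℕ) + k = (i : ℕ)
        then ((starRingEnd ℂ) (ψ i) * A i j * ψ j).re else 0) := by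
  simp only [dotProduct, Matrix.mulVec, Pi.star_apply, Complex.star_def,
    Matrix.of_apply, Finset.mul_sum, Complex.re_sum]
  apply Finset.sum_congr rfl; intro i _
  apply Finset.sum_congr rfl; intro j _
  by_cases h : (i : ℕ) + k = (j : ℕ) ∨ (j : ℕ) + k = (i : ℕ) <;> simp [h] <;> ring_nf

lemma energy_re (g : Fin N → ℝ) :
    (dotProduct (star (fun i => ((g i : ℝ) : ℂ) * ψ i))
      (A.mulVec (fun i => ((g i : ℝ) : ℂ) * ψ i))).re
    = ∑ i, ∑ j, g i * g j * ((starRingEnd ℂ) (ψ i) * A i j * ψ j).re := by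
  simp only [dotProduct, Matrix.mulVec, Pi.star_apply, Complex.star_def,
    Finset.mul_sum, Complex.re_sum, map_mul, Complex.conj_ofReal]
  apply Finset.sum_congr rfl; intro i _
  apply Finset.sum_congr rfl; intro j _
  have : (g i : ℂ) * (starRingEnd ℂ) (ψ i) * (A i j * ((g j : ℂ) * ψ j))
      = ((g i * g j : ℝ) : ℂ) * ((starRingEnd ℂ) (ψ i) * A i j * ψ j) := by
    push_cast; ring
  rw [this, Complex.re_ofReal_mul]

lemma norm_sq_eq (g : Fin N → ℝ) (hg : ∀ i, 0 ≤ g i) :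
    (∑ i, ‖((g i : ℝ) : ℂ) * ψ i‖ ^ 2) = ∑ i, (g i)^2 * ‖ψ i‖^2 := by
  apply Finset.sum_congr rfl; intro i _
  rw [norm_mul, Complex.norm_real, Real.norm_eq_abs, abs_of_nonneg (hg i)]
  ring

end LocAux

open LocAux

set_option maxHeartbeats 1600000

/-- Localization of large matrices (Lieb–Solovej, Appendix A).  `Ak k` is the matrix
consisting of the `k`-th supra- and infra-diagonals of the Hermitian matrix `A`. -/
theorem stmt_2 : ∃ C : ℝ, 0 < C ∧
    ∀ (N : ℕ) (A : Matrix (Fin N) (Fin N) ℂ), A.IsHermitian →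
    ∀ ψ : Fin N → ℂ, (∑ i, ‖ψ i‖ ^ 2) = 1 →
    ∀ M : ℕ, 0 < M → M ≤ N →
    ∃ n : ℕ, n ≤ N - M ∧ ∃ φ : Fin N → ℂ,
      (∑ i, ‖φ i‖ ^ 2) = 1 ∧
      (∀ j : Fin N, ((j : ℕ) < n ∨ n + M ≤ (j : ℕ)) → φ j = 0) ∧
      (dotProduct (star φ) (A.mulVec φ)).re ≤
        (dotProduct (star ψ) (A.mulVec ψ)).re
        + (C / (M : ℝ) ^ 2) * ∑ k ∈ Finset.Ico 1 M,
            (k : ℝ) ^ 2 * ‖dotProduct (star ψ)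
              ((Matrix.of fun i j : Fin N =>
                if (i : ℕ) + k = (j : ℕ) ∨ (j : ℕ) + k = (i : ℕ) then A i j else 0).mulVec ψ)‖
        + C * ∑ k ∈ Finset.Ico M N,
            ‖dotProduct (star ψ)
              ((Matrix.of fun i j : Fin N =>
                if (i : ℕ) + k = (j : ℕ) ∨ (j : ℕ) + k = (i : ℕ) then A i j else 0).mulVec ψ)‖ := by
  refine ⟨128, by norm_num, ?_⟩
  intro N A _hA ψ hψ M hM hMN
  -- abbreviations
  set T : Finset ℤ := Icc (1 - (M:ℤ)) ((N:ℤ)-1) with hT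
  set cc : Fin N → Fin N → ℝ := fun i j => ((starRingEnd ℂ) (ψ i) * A i j * ψ j).re with hcc
  set w : ℤ → ℝ := fun n => ∑ i : Fin N, (fr M ((i:ℤ) - n))^2 * ‖ψ i‖^2 with hw
  set E : ℤ → ℝ := fun n =>
    ∑ i : Fin N, ∑ j : Fin N, fr M ((i:ℤ) - n) * fr M ((j:ℤ) - n) * cc i j with hE
  set Dre : ℕ → ℝ := fun k => ∑ i : Fin N, ∑ j : Fin N,
    (if (i : ℕ) + k = (j : ℕ) ∨ (j : ℕ) + k = (i : ℕ) then cc i j else 0) with hDre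
  set Dab : ℕ → ℝ := fun k => ‖dotProduct (star ψ)
      ((Matrix.of fun i j : Fin N =>
        if (i : ℕ) + k = (j : ℕ) ∨ (j : ℕ) + k = (i : ℕ) then A i j else 0).mulVec ψ)‖ with hDab
  have hDreDab : ∀ k : ℕ, |Dre k| ≤ Dab k := by
    intro k
    simp only [hDre, hDab, hcc]
    rw [← dk_re A ψ k]
    exact Complex.abs_re_le_norm _
  have hDabnn : ∀ k : ℕ, 0 ≤ Dab k := fun k => norm_nonneg _
  have gam0pos : 0 < gam M 0 := by
    have := gam0_lb M hM
    have hMpos : (0:ℝ) < (M:ℝ) := by exact_mod_cast hM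
    have := pow_pos hMpos 3
    linarith
  have gam0lb := gam0_lb M hM
  -- total weight
  have sum_w : ∑ n ∈ T, w n = gam M 0 := by
    rw [hw, hT, Finset.sum_comm]
    have : ∀ i : Fin N, ∑ n ∈ Icc (1 - (M:ℤ)) ((N:ℤ)-1), (fr M ((i:ℤ) - n))^2 * ‖ψ i‖^2
        = gam M 0 * ‖ψ i‖^2 := by
      intro i
      rw [← Finset.sum_mul]
      congr 1
      rw [← colsum M N (i:ℤ) 0 (by exact_mod_cast Nat.zero_le _) (by have := i.isLt; omega)]
      apply Finset.sum_congr rfl; intro n _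
      rw [add_zero]; ring
    rw [Finset.sum_congr rfl (fun i _ => this i), ← Finset.mul_sum, hψ, mul_one]
  -- total energy
  have sum_E : ∑ n ∈ T, E n = ∑ k ∈ Finset.range N, gam M (k:ℤ) * Dre k := by
    rw [hE, hT, total M N cc, regroup M N (gam M) (gam_neg M) cc]
  -- lambda
  have lam_eq : (dotProduct (star ψ) (A.mulVec ψ)).re = ∑ k ∈ Finset.range N, Dre k := by
    rw [dot_re A ψ]
    have h1 : ∑ i : Fin N, ∑ j : Fin N, ((starRingEnd ℂ) (ψ i) * A i j * ψ j).re
        = ∑ i : Fin N, ∑ j : Fin N, (fun _ : ℤ => (1:ℝ)) ((j:ℤ) - (i:ℤ)) * cc i j := by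
      apply Finset.sum_congr rfl; intro i _
      apply Finset.sum_congr rfl; intro j _
      rw [hcc]; ring
    rw [h1, regroup M N (fun _ => (1:ℝ)) (fun _ => rfl) cc]
    apply Finset.sum_congr rfl; intro k _
    rw [one_mul, hDre]
  -- nonnegativity of weights
  have w_nonneg : ∀ n : ℤ, 0 ≤ w n := by
    intro n
    exact Finset.sum_nonneg fun i _ => mul_nonneg (sq_nonneg _) (sq_nonneg _)
  have wzero_E : ∀ n : ℤ, w n = 0 → E n = 0 := by
    intro n hwn
    simp only [hw] at hwn
    have hterm : ∀ i : Fin N, (fr M ((i:ℤ) - n))^2 * ‖ψ i‖^2 = 0 := by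
      intro i
      have := (Finset.sum_eq_zero_iff_of_nonneg
        (fun (i : Fin N) _ => mul_nonneg (sq_nonneg (fr M ((i:ℤ) - n))) (sq_nonneg ‖ψ i‖))).mp hwn
      exact this i (Finset.mem_univ i)
    simp only [hE]
    apply Finset.sum_eq_zero
    intro i _
    apply Finset.sum_eq_zero
    intro j _
    have h := hterm i
    rcases mul_eq_zero.mp h with h' | h'
    · rw [pow_eq_zero_iff (by norm_num)] at h'
      rw [h', zero_mul, zero_mul]
    · have hψi : ψ i = 0 := by
        rw [pow_eq_zero_iff (by norm_num), norm_eq_zero] at h'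
        exact h'
      rw [hcc]
      simp [hψi]
  -- select a good n₀
  have hsel : ∃ n₀ ∈ T, 0 < w n₀ ∧ E n₀ * gam M 0 ≤ (∑ n ∈ T, E n) * w n₀ := by
    by_contra hcon
    push_neg at hcon
    have hex : ∃ n ∈ T, 0 < w n := by
      by_contra hex
      push_neg at hex
      have : ∑ n ∈ T, w n = 0 := Finset.sum_eq_zero fun n hn =>
        le_antisymm (hex n hn) (w_nonneg n)
      rw [sum_w] at this
      linarith
    obtain ⟨n₁, hn₁T, hn₁⟩ := hex
    have hle : ∀ n ∈ T, (∑ m ∈ T, E m) * w n ≤ E n * gam M 0 := by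
      intro n hn
      rcases lt_or_eq_of_le (w_nonneg n) with h | h
      · exact le_of_lt (hcon n hn h)
      · rw [← h, mul_zero, wzero_E n h.symm, zero_mul]
    have hstrict : (∑ m ∈ T, E m) * w n₁ < E n₁ * gam M 0 := hcon n₁ hn₁T hn₁
    have h1 : ∑ n ∈ T, (∑ m ∈ T, E m) * w n < ∑ n ∈ T, E n * gam M 0 :=
      Finset.sum_lt_sum hle ⟨n₁, hn₁T, hstrict⟩
    rw [← Finset.mul_sum, sum_w, ← Finset.sum_mul] at h1
    exact lt_irrefl _ h1
  obtain ⟨n₀, hn₀T, hwpos, hEavg⟩ := hsel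
  have hn₀mem : 1 - (M:ℤ) ≤ n₀ ∧ n₀ ≤ (N:ℤ) - 1 := by
    rw [hT, Finset.mem_Icc] at hn₀T; exact hn₀T
  -- the error terms
  set err : ℝ := (128 / (M : ℝ) ^ 2) * (∑ k ∈ Finset.Ico 1 M, (k:ℝ)^2 * Dab k)
      + 128 * ∑ k ∈ Finset.Ico M N, Dab k with herr
  -- main estimate on the average
  have hMR : (0:ℝ) < (M:ℝ) := by exact_mod_cast hM
  have havg : ∑ n ∈ T, E n ≤ ((dotProduct (star ψ) (A.mulVec ψ)).re + err) * gam M 0 := by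
    rw [sum_E, lam_eq]
    have key : ∑ k ∈ Finset.range N, (gam M (k:ℤ) - gam M 0) * Dre k ≤ gam M 0 * err := by
      have hsplit : ∑ k ∈ Finset.range N, (gam M (k:ℤ) - gam M 0) * Dre k
          = (gam M 0 - gam M 0) * Dre 0
            + ∑ k ∈ Finset.Ico 1 M, (gam M (k:ℤ) - gam M 0) * Dre k
            + ∑ k ∈ Finset.Ico M N, (gam M (k:ℤ) - gam M 0) * Dre k := by
        rw [Finset.range_eq_Ico, ← Finset.sum_Ico_consecutive _ (Nat.zero_le M) hMN,
          Finset.sum_eq_sum_Ico_succ_bot hM]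
        norm_num
      rw [hsplit]
      have hb1 : ∑ k ∈ Finset.Ico 1 M, (gam M (k:ℤ) - gam M 0) * Dre k
          ≤ ∑ k ∈ Finset.Ico 1 M, gam M 0 * ((128 / (M:ℝ)^2) * ((k:ℝ)^2 * Dab k)) := by
        apply Finset.sum_le_sum
        intro k hk
        simp only [Finset.mem_Ico] at hk
        obtain ⟨hk1, hkM⟩ := hk
        have hd := gam_diff M (k:ℤ) (by exact_mod_cast Nat.zero_le k)
        have hub : gam M 0 - gam M (k:ℤ) ≤ (M:ℝ) * (k:ℝ)^2 := by
          have h1 := hd.2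
          have hkM' : (k:ℝ) ≤ (M:ℝ) := by exact_mod_cast le_of_lt hkM
          have : ((M:ℝ) + (k:ℤ)) * ((k:ℤ):ℝ)^2 / 2 ≤ (M:ℝ) * (k:ℝ)^2 := by
            push_cast
            nlinarith [sq_nonneg (k:ℝ)]
          calc gam M 0 - gam M (k:ℤ) ≤ ((M:ℝ) + ((k:ℤ):ℝ)) * (((k:ℤ):ℝ))^2 / 2 := h1
            _ ≤ (M:ℝ) * (k:ℝ)^2 := by push_cast at this ⊢; linarith
        have hre := abs_le.mp (hDreDab k)
        have e1 : (gam M (k:ℤ) - gam M 0) * Dre k ≤ (M:ℝ) * (k:ℝ)^2 * Dab k := by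
          nlinarith [hd.1, hre.1, hre.2, hDabnn k, sq_nonneg (k:ℝ)]
        have e2 : (M:ℝ) * (k:ℝ)^2 * Dab k
            ≤ gam M 0 * ((128 / (M:ℝ)^2) * ((k:ℝ)^2 * Dab k)) := by
          have hM2 : (0:ℝ) < (M:ℝ)^2 := by positivity
          rw [show gam M 0 * ((128 / (M:ℝ)^2) * ((k:ℝ)^2 * Dab k))
              = (gam M 0 * 128 * ((k:ℝ)^2 * Dab k)) / (M:ℝ)^2 by ring, le_div_iff₀ hM2]
          nlinarith [mul_nonneg (sq_nonneg (k:ℝ)) (hDabnn k), gam0lb]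
        linarith
      have hb2 : ∑ k ∈ Finset.Ico M N, (gam M (k:ℤ) - gam M 0) * Dre k
          ≤ ∑ k ∈ Finset.Ico M N, gam M 0 * (128 * Dab k) := by
        apply Finset.sum_le_sum
        intro k hk
        simp only [Finset.mem_Ico] at hk
        rw [gam_eq_zero (by exact_mod_cast hk.1)]
        have hre := abs_le.mp (hDreDab k)
        nlinarith [hDabnn k, gam0pos.le, hre.1, hre.2]
      have hfin : (gam M 0 - gam M 0) * Dre 0
            + ∑ k ∈ Finset.Ico 1 M, gam M 0 * ((128 / (M:ℝ)^2) * ((k:ℝ)^2 * Dab k))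
            + ∑ k ∈ Finset.Ico M N, gam M 0 * (128 * Dab k) = gam M 0 * err := by
        rw [herr]
        rw [sub_self, zero_mul, zero_add]
        rw [show ∀ S : Finset ℕ, ∑ k ∈ S, gam M 0 * ((128 / (M:ℝ)^2) * ((k:ℝ)^2 * Dab k))
            = gam M 0 * ((128 / (M:ℝ)^2) * ∑ k ∈ S, ((k:ℝ)^2 * Dab k)) from fun S => by
          rw [Finset.mul_sum, Finset.mul_sum]]
        rw [show ∀ S : Finset ℕ, ∑ k ∈ S, gam M 0 * (128 * Dab k)
            = gam M 0 * (128 * ∑ k ∈ S, Dab k) from fun S => by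
          rw [Finset.mul_sum, Finset.mul_sum]]
        ring
      calc (gam M 0 - gam M 0) * Dre 0
            + ∑ k ∈ Finset.Ico 1 M, (gam M (k:ℤ) - gam M 0) * Dre k
            + ∑ k ∈ Finset.Ico M N, (gam M (k:ℤ) - gam M 0) * Dre k
          ≤ (gam M 0 - gam M 0) * Dre 0
            + ∑ k ∈ Finset.Ico 1 M, gam M 0 * ((128 / (M:ℝ)^2) * ((k:ℝ)^2 * Dab k))
            + ∑ k ∈ Finset.Ico M N, gam M 0 * (128 * Dab k) := by linarith
        _ = gam M 0 * err := hfin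
    have expand : ∑ k ∈ Finset.range N, gam M (k:ℤ) * Dre k
        = gam M 0 * (∑ k ∈ Finset.range N, Dre k)
          + ∑ k ∈ Finset.range N, (gam M (k:ℤ) - gam M 0) * Dre k := by
      rw [Finset.mul_sum, ← Finset.sum_add_distrib]
      apply Finset.sum_congr rfl; intro k _; ring
    rw [expand]
    nlinarith [key]
  -- final construction
  refine ⟨(max 0 (min n₀ ((N:ℤ) - (M:ℤ)))).toNat, by omega, ?_⟩
  set a : ℝ := (Real.sqrt (w n₀))⁻¹ with ha
  have ha2 : a^2 * w n₀ = 1 := by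
    rw [ha]
    rw [show ((Real.sqrt (w n₀))⁻¹)^2 = ((Real.sqrt (w n₀))^2)⁻¹ by ring]
    rw [Real.sq_sqrt hwpos.le]
    exact inv_mul_cancel₀ (ne_of_gt hwpos)
  have hapos : 0 < a := by
    rw [ha]
    exact inv_pos.mpr (Real.sqrt_pos.mpr hwpos)
  set g : Fin N → ℝ := fun i => a * fr M ((i:ℤ) - n₀) with hg
  have hgnn : ∀ i, 0 ≤ g i := fun i => mul_nonneg hapos.le (fr_nonneg _ _)
  refine ⟨fun i => ((g i : ℝ) : ℂ) * ψ i, ?_, ?_, ?_⟩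
  · rw [norm_sq_eq ψ g hgnn]
    have : ∑ i : Fin N, (g i)^2 * ‖ψ i‖^2 = a^2 * w n₀ := by
      rw [hw, Finset.mul_sum]
      apply Finset.sum_congr rfl; intro i _
      rw [hg]; ring
    rw [this, ha2]
  · intro j hj
    have hfr : fr M ((j:ℤ) - n₀) = 0 := by
      apply fr_eq_zero
      have hjN := j.isLt
      rcases hj with hj | hj
      · left
        have : (j:ℤ) < (max 0 (min n₀ ((N:ℤ) - (M:ℤ)))).toNat := by exact_mod_cast hj
        omega
      · right
        have : ((max 0 (min n₀ ((N:ℤ) - (M:ℤ)))).toNat : ℤ) + (M:ℤ) ≤ (j:ℤ) := by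
          exact_mod_cast hj
        omega
    rw [hg]
    simp [hfr]
  · have hen : (dotProduct (star (fun i => ((g i : ℝ) : ℂ) * ψ i))
        (A.mulVec (fun i => ((g i : ℝ) : ℂ) * ψ i))).re = a^2 * E n₀ := by
      rw [energy_re A ψ g, hE, Finset.mul_sum]
      apply Finset.sum_congr rfl; intro i _
      rw [Finset.mul_sum]
      apply Finset.sum_congr rfl; intro j _
      rw [hg, hcc]; ring
    rw [hen]
    have h1 : a^2 * E n₀ ≤ (∑ n ∈ T, E n) / gam M 0 := by
      have h2 : E n₀ / w n₀ ≤ (∑ n ∈ T, E n) / gam M 0 :=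
        (div_le_div_iff₀ hwpos gam0pos).mpr hEavg
      have h3 : a^2 * E n₀ = E n₀ / w n₀ := by
        rw [eq_div_iff (ne_of_gt hwpos)]
        calc a^2 * E n₀ * w n₀ = (a^2 * w n₀) * E n₀ := by ring
          _ = E n₀ := by rw [ha2, one_mul]
      rw [h3]; exact h2
    have h4 : (∑ n ∈ T, E n) / gam M 0
        ≤ (dotProduct (star ψ) (A.mulVec ψ)).re + err :=
      (div_le_iff₀ gam0pos).mpr havg
    rw [herr, hDab] at h4
    calc a^2 * E n₀ ≤ (∑ n ∈ T, E n) / gam M 0 := h1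
      _ ≤ _ := by
        refine le_trans h4 ?_
        apply le_of_eq
        ring
end

section
/- Let f: ℤ → ℝ be the normalized tent function f(s) = A_M (M+1−2|s|) for 2|s| < M (M odd) and f(s) = 0 otherwise, with A_M chosen so that Σ_s f(s)² = 1. Then γ_k := (1/2) Σ_s (f(s) − f(s+k))² satisfies γ_k ≤ C k²/(k² + M²) for all k ≥ 0 and all M, with a universal constant C. -/
open Finset

lemma icc_succ_ (n : ℕ) :
    Finset.Icc (-((n:ℤ)+1)) ((n:ℤ)+1) =
      insert (-((n:ℤ)+1)) (insert ((n:ℤ)+1) (Finset.Icc (-(n:ℤ)) n)) := by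
  ext x
  simp only [Finset.mem_Icc, Finset.mem_insert]
  omega

lemma abs_sum_Icc_ (m : ℕ) :
    ∑ s ∈ Finset.Icc (-(m:ℤ)) m, |(s:ℝ)| = m*(m+1) := by
  induction m with
  | zero => simp
  | succ n ih =>
    push_cast
    rw [icc_succ_ n, Finset.sum_insert (by simp only [Finset.mem_insert, Finset.mem_Icc]; omega),
      Finset.sum_insert (by simp only [Finset.mem_Icc]; omega), ih]
    push_cast
    rw [abs_of_nonpos (by linarith [Nat.cast_nonneg (α := ℝ) n]),
      abs_of_nonneg (by linarith [Nat.cast_nonneg (α := ℝ) n])]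
    ring

lemma sq_sum_Icc_ (m : ℕ) :
    ∑ s ∈ Finset.Icc (-(m:ℤ)) m, ((s:ℝ))^2 = m*(m+1)*(2*m+1)/3 := by
  induction m with
  | zero => simp
  | succ n ih =>
    push_cast
    rw [icc_succ_ n, Finset.sum_insert (by simp only [Finset.mem_insert, Finset.mem_Icc]; omega),
      Finset.sum_insert (by simp only [Finset.mem_Icc]; omega), ih]
    push_cast
    ring

lemma tent_sum_ (m : ℕ) :
    ∑ s ∈ Finset.Icc (-(m:ℤ)) m, ((2*(m:ℝ)+2) - 2*|(s:ℝ)|)^2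
      = 4*((m:ℝ)+1)^2 + 4*(m:ℝ)*(m+1)*(2*m+1)/3 := by
  have hcard : (Finset.Icc (-(m:ℤ)) m).card = 2*m+1 := by
    rw [Int.card_Icc]; omega
  have h : ∀ s ∈ Finset.Icc (-(m:ℤ)) m,
      ((2*(m:ℝ)+2) - 2*|(s:ℝ)|)^2
        = (2*(m:ℝ)+2)^2 - (8*(m:ℝ)+8)*|(s:ℝ)| + 4*(s:ℝ)^2 := by
    intro s _
    rw [show (4:ℝ)*(s:ℝ)^2 = 4*|(s:ℝ)|^2 by rw [sq_abs]]
    ring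
  rw [Finset.sum_congr rfl h]
  rw [Finset.sum_add_distrib, Finset.sum_sub_distrib, Finset.sum_const,
    ← Finset.mul_sum, ← Finset.mul_sum, abs_sum_Icc_, sq_sum_Icc_, hcard]
  push_cast
  ring

set_option maxHeartbeats 1000000 in
/-- Discrete Dirichlet energy of shifted normalized tent functions:
`γ_k = (1/2) Σ_s (f(s) − f(s+k))² ≤ C k²/(k² + M²)` with a universal constant. -/
theorem stmt_3 : ∃ C : ℝ, 0 < C ∧
    ∀ (M : ℕ), Odd M → ∀ AM : ℝ,
    let f : ℤ → ℝ := fun s =>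
      if 2 * |s| < (M : ℤ) then AM * ((M : ℝ) + 1 - 2 * |(s : ℝ)|) else 0
    (∑' s : ℤ, f s ^ 2) = 1 →
    ∀ k : ℕ,
      (1 / 2) * ∑' s : ℤ, (f s - f (s + (k : ℤ))) ^ 2 ≤
        C * (k : ℝ) ^ 2 / ((k : ℝ) ^ 2 + (M : ℝ) ^ 2) := by
  refine ⟨24, by norm_num, ?_⟩
  intro M hM AM f hnorm k
  obtain ⟨m, hm⟩ := hM
  subst hm
  set M : ℕ := 2*m+1 with hMdef
  have hfdef : ∀ s : ℤ, f s = if 2 * |s| < (M : ℤ) then AM * ((M : ℝ) + 1 - 2 * |(s : ℝ)|) else 0 :=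
    fun s => rfl
  -- support of f
  have hf_supp : ∀ s : ℤ, s ∉ Finset.Icc (-(m:ℤ)) m → f s = 0 := by
    intro s hs
    simp only [Finset.mem_Icc, not_and_or, not_le] at hs
    rw [hfdef, if_neg]
    rcases abs_cases s with ⟨h, h'⟩ | ⟨h, h'⟩ <;> rw [h] <;> push_cast <;> omega
  have hf_mem : ∀ s : ℤ, s ∈ Finset.Icc (-(m:ℤ)) m → 2 * |s| < (M:ℤ) := by
    intro s hs
    simp only [Finset.mem_Icc] at hs
    rcases abs_cases s with ⟨h, h'⟩ | ⟨h, h'⟩ <;> rw [h] <;> push_cast <;> omega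
  -- value of f as scaled max-tent
  have htent : ∀ s : ℤ, f s = AM * max 0 ((2*(m:ℝ)+2) - 2*|(s:ℝ)|) := by
    intro s
    rw [hfdef]
    split_ifs with h
    · rw [max_eq_right]
      · push_cast [hMdef]; ring_nf
      · have h1 : |s| ≤ (m:ℤ) := by push_cast at h; omega
        have h2 : |(s:ℝ)| ≤ (m:ℝ) := by
          rw [← Int.cast_abs]; exact_mod_cast h1
        linarith
    · rw [max_eq_left, mul_zero]
      have h1 : (m:ℤ) + 1 ≤ |s| := by push_cast at h; omega
      have h2 : (m:ℝ) + 1 ≤ |(s:ℝ)| := by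
        rw [← Int.cast_abs]; exact_mod_cast h1
      linarith
  -- normalization
  set U : ℝ := ∑ s ∈ Finset.Icc (-(m:ℤ)) m, ((2*(m:ℝ)+2) - 2*|(s:ℝ)|)^2 with hUdef
  have hUval : U = 4*((m:ℝ)+1)^2 + 4*(m:ℝ)*(m+1)*(2*m+1)/3 := tent_sum_ m
  have hM3 : ((M:ℝ))^3 ≤ 3 * U := by
    rw [hUval]; push_cast [hMdef]
    nlinarith [Nat.cast_nonneg (α := ℝ) m]
  have hMpos : (0:ℝ) < (M:ℝ) := by positivity
  have hUpos : 0 < U := by nlinarith [pow_pos hMpos 3]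
  have hnorm' : AM^2 * U = 1 := by
    rw [← hnorm, tsum_eq_sum (s := Finset.Icc (-(m:ℤ)) m)
      (fun b hb => by rw [hf_supp b hb]; ring)]
    rw [hUdef, Finset.mul_sum]
    refine Finset.sum_congr rfl fun s hs => ?_
    rw [hfdef, if_pos (hf_mem s hs), mul_pow]
    push_cast [hMdef]
    ring_nf
  have hA2 : AM^2 ≤ 3 / (M:ℝ)^3 := by
    rw [le_div_iff₀ (by positivity)]
    calc AM^2 * (M:ℝ)^3 ≤ AM^2 * (3*U) :=
          mul_le_mul_of_nonneg_left hM3 (sq_nonneg AM)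
      _ = 3 := by rw [← mul_assoc, mul_comm (AM^2) 3, mul_assoc, hnorm']; ring

  -- trivial case k = 0
  rcases Nat.eq_zero_or_pos k with hk0 | hkpos
  · subst hk0
    simp only [Nat.cast_zero, add_zero, sub_self]
    simp
  have hkR : (1:ℝ) ≤ (k:ℝ) := by exact_mod_cast hkpos
  -- supports for the difference
  set T : Finset ℤ := Finset.Icc (-(m:ℤ)-k) m with hTdef
  have hT_supp : ∀ s : ℤ, s ∉ T → (f s - f (s + (k:ℤ)))^2 = 0 := by
    intro s hs
    simp only [hTdef, Finset.mem_Icc, not_and_or, not_le] at hs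
    have h1 : f s = 0 := hf_supp s (by simp only [Finset.mem_Icc]; omega)
    have h2 : f (s + (k:ℤ)) = 0 := hf_supp _ (by simp only [Finset.mem_Icc]; omega)
    rw [h1, h2]; ring
  have htsum : ∑' s : ℤ, (f s - f (s + (k:ℤ)))^2
      = ∑ s ∈ T, (f s - f (s + (k:ℤ)))^2 := tsum_eq_sum hT_supp
  have hTcard : T.card = 2*m+1+k := by
    rw [hTdef, Int.card_Icc]; omega
  rcases le_or_gt (k:ℝ) (M:ℝ) with hkM | hkM
  · -- small k : pointwise Lipschitz bound
    have key : ∀ a b : ℝ, |max 0 a - max 0 b| ≤ |a - b| := fun a b => by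
      rw [max_comm 0 a, max_comm 0 b]; exact abs_max_sub_max_le_abs a b 0
    have hlip : ∀ s : ℤ, (f s - f (s + (k:ℤ)))^2 ≤ AM^2 * (2*(k:ℝ))^2 := by
      intro s
      rw [htent s, htent (s + (k:ℤ)), ← mul_sub, mul_pow]
      push_cast
      refine mul_le_mul_of_nonneg_left ?_ (sq_nonneg AM)
      have hd : |max 0 ((2*(m:ℝ)+2) - 2*|(s:ℝ)|) - max 0 ((2*(m:ℝ)+2) - 2*|(s:ℝ)+(k:ℝ)|)|
          ≤ 2*(k:ℝ) := by
        refine le_trans (key _ _) ?_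
        rw [show ((2*(m:ℝ)+2) - 2*|(s:ℝ)|) - ((2*(m:ℝ)+2) - 2*|(s:ℝ)+(k:ℝ)|)
            = 2*((|(s:ℝ)+(k:ℝ)|) - |(s:ℝ)|) from by ring, abs_mul, abs_two]
        have h2 : |(|(s:ℝ)+(k:ℝ)| - |(s:ℝ)|)| ≤ |((s:ℝ)+(k:ℝ)) - (s:ℝ)| :=
          abs_abs_sub_abs_le_abs_sub _ _
        have h3 : ((s:ℝ)+(k:ℝ)) - (s:ℝ) = (k:ℝ) := by ring
        rw [h3, abs_of_nonneg (by positivity : (0:ℝ) ≤ (k:ℝ))] at h2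
        linarith
      calc (max 0 ((2*(m:ℝ)+2) - 2*|(s:ℝ)|) - max 0 ((2*(m:ℝ)+2) - 2*|(s:ℝ)+(k:ℝ)|))^2
          = |max 0 ((2*(m:ℝ)+2) - 2*|(s:ℝ)|) - max 0 ((2*(m:ℝ)+2) - 2*|(s:ℝ)+(k:ℝ)|)|^2 := by
            rw [sq_abs]
        _ ≤ (2*(k:ℝ))^2 := by
            apply pow_le_pow_left₀ (abs_nonneg _) hd
    have hsum_le : ∑ s ∈ T, (f s - f (s + (k:ℤ)))^2 ≤ (2*(m:ℝ)+1+(k:ℝ)) * (AM^2 * (2*(k:ℝ))^2) := by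
      calc ∑ s ∈ T, (f s - f (s + (k:ℤ)))^2 ≤ T.card • (AM^2 * (2*(k:ℝ))^2) :=
            Finset.sum_le_card_nsmul T _ _ (fun s _ => hlip s)
        _ = (2*(m:ℝ)+1+(k:ℝ)) * (AM^2 * (2*(k:ℝ))^2) := by
            rw [hTcard, nsmul_eq_mul]; push_cast; ring
    rw [htsum]
    have hMk : (2*(m:ℝ)+1+(k:ℝ)) ≤ 2*(M:ℝ) := by
      push_cast [hMdef] at hkM ⊢; linarith
    have hA2' : (0:ℝ) ≤ AM^2 := sq_nonneg AM
    have h1 : (1:ℝ)/2 * ((2*(m:ℝ)+1+(k:ℝ)) * (AM^2 * (2*(k:ℝ))^2))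
        ≤ (1:ℝ)/2 * (2*(M:ℝ) * ((3/(M:ℝ)^3) * (2*(k:ℝ))^2)) := by
      gcongr <;> first | exact hMk | exact hA2
    have h2 : (1:ℝ)/2 * (2*(M:ℝ) * ((3/(M:ℝ)^3) * (2*(k:ℝ))^2)) = 12*(k:ℝ)^2/(M:ℝ)^2 := by
      field_simp
      ring
    have hk2M : (k:ℝ)^2 ≤ (M:ℝ)^2 := by nlinarith
    have h3 : 12*(k:ℝ)^2/(M:ℝ)^2 ≤ 24 * (k:ℝ)^2 / ((k:ℝ)^2 + (M:ℝ)^2) := by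
      rw [div_le_div_iff₀ (by positivity) (by positivity)]
      nlinarith [mul_le_mul_of_nonneg_left hk2M (by positivity : (0:ℝ) ≤ 12*(k:ℝ)^2)]
    calc (1:ℝ)/2 * ∑ s ∈ T, (f s - f (s + (k:ℤ)))^2
        ≤ (1:ℝ)/2 * ((2*(m:ℝ)+1+(k:ℝ)) * (AM^2 * (2*(k:ℝ))^2)) :=
          mul_le_mul_of_nonneg_left hsum_le (by norm_num)
      _ ≤ 24 * (k:ℝ)^2 / ((k:ℝ)^2 + (M:ℝ)^2) := by rw [h2] at h1; linarith
  · -- large k : crude bound γ ≤ 2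
    have hSf : Summable (fun s : ℤ => f s ^ 2) :=
      summable_of_ne_finset_zero (s := Finset.Icc (-(m:ℤ)) m)
        (fun b hb => by rw [hf_supp b hb]; ring)
    have hSf' : Summable (fun s : ℤ => f (s + (k:ℤ)) ^ 2) :=
      summable_of_ne_finset_zero (s := Finset.Icc (-(m:ℤ)-k) ((m:ℤ)-k))
        (fun b hb => by
          rw [hf_supp (b + (k:ℤ)) (by
            simp only [Finset.mem_Icc] at hb ⊢; omega)]; ring)
    have hshift : ∑' s : ℤ, f (s + (k:ℤ)) ^ 2 = ∑' s : ℤ, f s ^ 2 :=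
      (Equiv.addRight (k:ℤ)).tsum_eq (fun s => f s ^ 2)
    have hdiff : Summable (fun s : ℤ => (f s - f (s + (k:ℤ)))^2) :=
      summable_of_ne_finset_zero (s := T) hT_supp
    have hbound : ∑' s : ℤ, (f s - f (s + (k:ℤ)))^2 ≤ 4 := by
      have h1 : ∑' s : ℤ, (f s - f (s + (k:ℤ)))^2
          ≤ ∑' s : ℤ, (2 * f s ^ 2 + 2 * f (s + (k:ℤ)) ^ 2) := by
        refine Summable.tsum_le_tsum (fun s => by nlinarith [sq_nonneg (f s + f (s + (k:ℤ)))])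
          hdiff ((hSf.mul_left 2).add (hSf'.mul_left 2))
      rw [Summable.tsum_add (hSf.mul_left 2) (hSf'.mul_left 2), tsum_mul_left, tsum_mul_left,
        hshift, hnorm] at h1
      linarith
    have hrhs : (2:ℝ) ≤ 24 * (k:ℝ)^2 / ((k:ℝ)^2 + (M:ℝ)^2) := by
      rw [le_div_iff₀ (by positivity)]
      nlinarith
    linarith
end

section
/- Let b_k, b*_k be operators on a Hilbert space with b_k = ã(χ_k)a*_0 and b*_k = ã*(χ_k)a_0 for some fixed vector operators, and suppose the commutators satisfy [b_k, b*_k] ≤ N·1 and [b_{−k}, b*_{−k}] ≤ N·1 for some constant N > 0. Then for constants A ≥ B > 0 and κ ∈ ℂ one has A(b*_k b_k + b*_{−k} b_{−k}) + B(b*_k b*_{−k} + b_k b_{−k}) + κ(b*_k + b_{−k}) + κ̄(b_k + b*_{−k}) ≥ −(A − √(A²−B²)) N − 2|κ|²/(A+B). -/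
open ContinuousLinearMap

set_option maxHeartbeats 2000000 in
/-- Simple case of Bogolubov's method (Theorem 6.3 combined with the commutator
bound): if `[b_k, b_k*] ≤ N` and `[b_{−k}, b_{−k}*] ≤ N`, then for `A ≥ B > 0`
and `κ ∈ ℂ`,
`A(b_k* b_k + b_{−k}* b_{−k}) + B(b_k* b_{−k}* + b_k b_{−k}) + κ(b_k* + b_{−k})
 + κ̄(b_k + b_{−k}*) ≥ −(A − √(A²−B²)) N − 2|κ|²/(A+B)` as quadratic forms. -/
theorem stmt_14 {H : Type*} [NormedAddCommGroup H] [InnerProductSpace ℂ H] [CompleteSpace H]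
    (bk bmk : H →L[ℂ] H) (N : ℝ) (hN : 0 < N)
    (hck : ∀ ψ : H,
      (inner ℂ ψ ((bk ∘L adjoint bk - adjoint bk ∘L bk) ψ) : ℂ).re ≤ N * ‖ψ‖ ^ 2)
    (hcmk : ∀ ψ : H,
      (inner ℂ ψ ((bmk ∘L adjoint bmk - adjoint bmk ∘L bmk) ψ) : ℂ).re ≤ N * ‖ψ‖ ^ 2)
    (A B : ℝ) (hAB : B ≤ A) (hB : 0 < B) (κ : ℂ) :
    ∀ ψ : H,
      (-((A - Real.sqrt (A ^ 2 - B ^ 2)) * N) - 2 * ‖κ‖ ^ 2 / (A + B)) * ‖ψ‖ ^ 2 ≤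
      (inner ℂ ψ ((((A : ℝ) : ℂ) • (adjoint bk ∘L bk + adjoint bmk ∘L bmk)
        + ((B : ℝ) : ℂ) • (adjoint bk ∘L adjoint bmk + bk ∘L bmk)
        + κ • (adjoint bk + bmk)
        + (starRingEnd ℂ κ) • (bk + adjoint bmk)) ψ) : ℂ).re := by
  intro ψ
  have hA : 0 < A := lt_of_lt_of_le hB hAB
  set s : ℝ := Real.sqrt (A ^ 2 - B ^ 2) with hs_def
  have hs0 : 0 ≤ s := Real.sqrt_nonneg _
  have hssq : s ^ 2 = A ^ 2 - B ^ 2 := Real.sq_sqrt (by nlinarith)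
  have hsA : s < A := by nlinarith
  set α : ℝ := (A - s) / B with hα_def
  have hα0 : 0 < α := div_pos (by linarith) hB
  set D : ℝ := B / (2 * α) with hD_def
  have hD0 : 0 < D := div_pos hB (by linarith)
  set t : ℝ := (1 + α) / (A + B) with ht_def
  have ht0 : 0 < t := div_pos (by linarith) (by linarith)
  have hkey : B * (1 + α ^ 2) = 2 * A * α := by
    rw [hα_def]; field_simp; nlinarith [hssq]
  have hDA : D * (1 + α ^ 2) = A := by
    rw [hD_def]; field_simp; linear_combination hkey
  have hDB : 2 * D * α = B := by
    rw [hD_def]; field_simp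
  have hDt : D * t * (1 + α) = 1 := by
    rw [hD_def, ht_def]; field_simp; linear_combination hkey
  have hDt2 : 2 * D * t ^ 2 = 2 / (A + B) := by
    rw [hD_def, ht_def]; clear_value α; field_simp; linear_combination hkey
  have hBα : B * α = A - s := by
    rw [hα_def]; field_simp
  have hDa2 : 2 * (D * α ^ 2) = A - s := by
    rw [← hBα, hD_def]; field_simp
  -- commutator bounds
  have hU' : ‖adjoint bk ψ‖ ^ 2 ≤ ‖bk ψ‖ ^ 2 + N * ‖ψ‖ ^ 2 := by
    have h := hck ψ
    have e1 : (inner ℂ ψ ((bk ∘L adjoint bk - adjoint bk ∘L bk) ψ) : ℂ)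
        = ((‖adjoint bk ψ‖ ^ 2 : ℝ) : ℂ) - ((‖bk ψ‖ ^ 2 : ℝ) : ℂ) := by
      simp only [sub_apply, comp_apply, inner_sub_right, adjoint_inner_right]
      rw [← adjoint_inner_left bk]
      simp only [inner_self_eq_norm_sq_to_K]
      norm_cast
    rw [e1] at h
    simp only [Complex.sub_re, Complex.ofReal_re] at h
    linarith
  have hV' : ‖adjoint bmk ψ‖ ^ 2 ≤ ‖bmk ψ‖ ^ 2 + N * ‖ψ‖ ^ 2 := by
    have h := hcmk ψ
    have e1 : (inner ℂ ψ ((bmk ∘L adjoint bmk - adjoint bmk ∘L bmk) ψ) : ℂ)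
        = ((‖adjoint bmk ψ‖ ^ 2 : ℝ) : ℂ) - ((‖bmk ψ‖ ^ 2 : ℝ) : ℂ) := by
      simp only [sub_apply, comp_apply, inner_sub_right, adjoint_inner_right]
      rw [← adjoint_inner_left bmk]
      simp only [inner_self_eq_norm_sq_to_K]
      norm_cast
    rw [e1] at h
    simp only [Complex.sub_re, Complex.ofReal_re] at h
    linarith
  -- scalar abbreviations
  set p : ℂ := inner ℂ (bk ψ) ψ with hp_def
  set q : ℂ := inner ℂ (bmk ψ) ψ with hq_def
  set z1 : ℂ := inner ℂ (bk ψ) (adjoint bmk ψ) with hz1_def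
  set z2 : ℂ := inner ℂ (adjoint bk ψ) (bmk ψ) with hz2_def
  set U : ℝ := ‖bk ψ‖ ^ 2 with hU_def
  set V : ℝ := ‖bmk ψ‖ ^ 2 with hV_def
  set U' : ℝ := ‖adjoint bk ψ‖ ^ 2 with hU'_def
  set V' : ℝ := ‖adjoint bmk ψ‖ ^ 2 with hV'_def
  set P : ℝ := ‖ψ‖ ^ 2 with hP_def
  set K2 : ℝ := Complex.normSq κ with hK2_def
  -- atomic inner-product identities
  have t1 : (inner ℂ ψ ((adjoint bk) (bk ψ)) : ℂ) = ((U : ℝ) : ℂ) := by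
    rw [adjoint_inner_right, inner_self_eq_norm_sq_to_K]; norm_cast
  have t2 : (inner ℂ ψ ((adjoint bmk) (bmk ψ)) : ℂ) = ((V : ℝ) : ℂ) := by
    rw [adjoint_inner_right, inner_self_eq_norm_sq_to_K]; norm_cast
  have t3 : (inner ℂ ψ ((adjoint bk) ((adjoint bmk) ψ)) : ℂ) = z1 :=
    adjoint_inner_right _ _ _
  have t4 : (inner ℂ ψ (bk (bmk ψ)) : ℂ) = z2 := (adjoint_inner_left _ _ _).symm
  have t5 : (inner ℂ ψ ((adjoint bk) ψ) : ℂ) = p := adjoint_inner_right _ _ _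
  have t6 : (inner ℂ ψ (bmk ψ) : ℂ) = starRingEnd ℂ q := (inner_conj_symm _ _).symm
  have t7 : (inner ℂ ψ (bk ψ) : ℂ) = starRingEnd ℂ p := (inner_conj_symm _ _).symm
  have t8 : (inner ℂ ψ ((adjoint bmk) ψ) : ℂ) = q := adjoint_inner_right _ _ _
  -- the quadratic form, rewritten
  have hbig : (inner ℂ ψ ((((A : ℝ) : ℂ) • (adjoint bk ∘L bk + adjoint bmk ∘L bmk)
        + ((B : ℝ) : ℂ) • (adjoint bk ∘L adjoint bmk + bk ∘L bmk)
        + κ • (adjoint bk + bmk)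
        + (starRingEnd ℂ κ) • (bk + adjoint bmk)) ψ) : ℂ)
      = ((A : ℝ) : ℂ) * (((U : ℝ) : ℂ) + ((V : ℝ) : ℂ)) + ((B : ℝ) : ℂ) * (z1 + z2)
        + κ * (p + starRingEnd ℂ q) + starRingEnd ℂ κ * (starRingEnd ℂ p + q) := by
    simp only [add_apply, smul_apply, comp_apply, inner_add_right, inner_smul_right,
      t1, t2, t3, t4, t5, t6, t7, t8]
    try ring
  -- the completed squares
  set a : ℂ := ((t : ℝ) : ℂ) * κ with ha_def
  set X : H := bk ψ + ((α : ℝ) : ℂ) • (adjoint bmk ψ) + a • ψ with hX_def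
  set Y : H := bmk ψ + ((α : ℝ) : ℂ) • (adjoint bk ψ) + (starRingEnd ℂ a) • ψ with hY_def
  have c1 : (inner ℂ (adjoint bmk ψ) (bk ψ) : ℂ) = starRingEnd ℂ z1 := (inner_conj_symm _ _).symm
  have c2 : (inner ℂ (bmk ψ) (adjoint bk ψ) : ℂ) = starRingEnd ℂ z2 := (inner_conj_symm _ _).symm
  have c3 : (inner ℂ ψ (bk ψ) : ℂ) = starRingEnd ℂ p := t7
  have c4 : (inner ℂ ψ (bmk ψ) : ℂ) = starRingEnd ℂ q := t6
  have c5 : (inner ℂ (adjoint bmk ψ) ψ : ℂ) = starRingEnd ℂ q := by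
    rw [adjoint_inner_left]; exact t6
  have c6 : (inner ℂ ψ ((adjoint bmk) ψ) : ℂ) = q := t8
  have c7 : (inner ℂ (adjoint bk ψ) ψ : ℂ) = starRingEnd ℂ p := by
    rw [adjoint_inner_left]; exact t7
  have c8 : (inner ℂ ψ ((adjoint bk) ψ) : ℂ) = p := t5
  have cuu : (inner ℂ (bk ψ) (bk ψ) : ℂ) = ((U : ℝ) : ℂ) := by
    rw [inner_self_eq_norm_sq_to_K]; norm_cast
  have cvv : (inner ℂ (bmk ψ) (bmk ψ) : ℂ) = ((V : ℝ) : ℂ) := by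
    rw [inner_self_eq_norm_sq_to_K]; norm_cast
  have cuu' : (inner ℂ (adjoint bk ψ) (adjoint bk ψ) : ℂ) = ((U' : ℝ) : ℂ) := by
    rw [inner_self_eq_norm_sq_to_K]; norm_cast
  have cvv' : (inner ℂ (adjoint bmk ψ) (adjoint bmk ψ) : ℂ) = ((V' : ℝ) : ℂ) := by
    rw [inner_self_eq_norm_sq_to_K]; norm_cast
  have cpp : (inner ℂ ψ ψ : ℂ) = ((P : ℝ) : ℂ) := by
    rw [inner_self_eq_norm_sq_to_K]; norm_cast
  have cup : (inner ℂ (bk ψ) ψ : ℂ) = p := rfl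
  have cvp : (inner ℂ (bmk ψ) ψ : ℂ) = q := rfl
  have cz1 : (inner ℂ (bk ψ) (adjoint bmk ψ) : ℂ) = z1 := rfl
  have cz2 : (inner ℂ (adjoint bk ψ) (bmk ψ) : ℂ) = z2 := rfl
  have cpu : (inner ℂ ψ (bk ψ) : ℂ) = starRingEnd ℂ p := t7
  have hXX : (inner ℂ X X : ℂ)
      = ((U : ℝ) : ℂ) + ((α : ℝ) : ℂ) ^ 2 * ((V' : ℝ) : ℂ)
        + a * starRingEnd ℂ a * ((P : ℝ) : ℂ)
        + ((α : ℝ) : ℂ) * (z1 + starRingEnd ℂ z1)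
        + (a * p + starRingEnd ℂ (a * p))
        + ((α : ℝ) : ℂ) * (a * starRingEnd ℂ q + starRingEnd ℂ a * q) := by
    simp only [hX_def, inner_add_left, inner_add_right, inner_smul_left, inner_smul_right,
      Complex.conj_ofReal, map_mul, Complex.conj_conj,
      c1, c3, c5, c6, cuu, cvv', cpp, cup, cz1]
    try ring
  have hYY : (inner ℂ Y Y : ℂ)
      = ((V : ℝ) : ℂ) + ((α : ℝ) : ℂ) ^ 2 * ((U' : ℝ) : ℂ)
        + a * starRingEnd ℂ a * ((P : ℝ) : ℂ)
        + ((α : ℝ) : ℂ) * (z2 + starRingEnd ℂ z2)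
        + (starRingEnd ℂ a * q + starRingEnd ℂ (starRingEnd ℂ a * q))
        + ((α : ℝ) : ℂ) * (starRingEnd ℂ a * starRingEnd ℂ p + a * p) := by
    simp only [hY_def, inner_add_left, inner_add_right, inner_smul_left, inner_smul_right,
      Complex.conj_ofReal, map_mul, Complex.conj_conj,
      c2, c4, c7, c8, cvv, cuu', cpp, cvp, cz2]
    try ring
  -- real components
  have hXre : (inner ℂ X X : ℂ).re = ‖X‖ ^ 2 := by
    rw [inner_self_eq_norm_sq_to_K]; norm_cast
  have hYre : (inner ℂ Y Y : ℂ).re = ‖Y‖ ^ 2 := by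
    rw [inner_self_eq_norm_sq_to_K]; norm_cast
  have hEX : ‖X‖ ^ 2 = U + α ^ 2 * V' + t ^ 2 * (κ.re ^ 2 + κ.im ^ 2) * P + 2 * α * z1.re
      + 2 * t * (κ.re * p.re - κ.im * p.im) + 2 * α * t * (κ.re * q.re + κ.im * q.im) := by
    have h := congrArg Complex.re hXX
    rw [hXre] at h
    simp only [ha_def, Complex.add_re, Complex.mul_re, Complex.mul_im, Complex.ofReal_re,
      Complex.ofReal_im, Complex.conj_re, Complex.conj_im, Complex.add_im,
      ← Complex.ofReal_pow, hK2_def, Complex.normSq_apply] at h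
    linear_combination h
  have hEY : ‖Y‖ ^ 2 = V + α ^ 2 * U' + t ^ 2 * (κ.re ^ 2 + κ.im ^ 2) * P + 2 * α * z2.re
      + 2 * t * (κ.re * q.re + κ.im * q.im) + 2 * α * t * (κ.re * p.re - κ.im * p.im) := by
    have h := congrArg Complex.re hYY
    rw [hYre] at h
    simp only [ha_def, Complex.add_re, Complex.mul_re, Complex.mul_im, Complex.ofReal_re,
      Complex.ofReal_im, Complex.conj_re, Complex.conj_im, Complex.add_im,
      ← Complex.ofReal_pow, Complex.normSq_apply] at h
    linear_combination h
  clear_value s α D t p q z1 z2 U V U' V' P K2 a X Y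
  have hsq : 0 ≤ D * (U + α ^ 2 * V' + t ^ 2 * (κ.re ^ 2 + κ.im ^ 2) * P + 2 * α * z1.re
      + 2 * t * (κ.re * p.re - κ.im * p.im) + 2 * α * t * (κ.re * q.re + κ.im * q.im))
      + D * (V + α ^ 2 * U' + t ^ 2 * (κ.re ^ 2 + κ.im ^ 2) * P + 2 * α * z2.re
      + 2 * t * (κ.re * q.re + κ.im * q.im) + 2 * α * t * (κ.re * p.re - κ.im * p.im)) := by
    rw [← hEX, ← hEY]
    exact add_nonneg (mul_nonneg hD0.le (by positivity)) (mul_nonneg hD0.le (by positivity))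
  have h1 : D * α ^ 2 * V' ≤ D * α ^ 2 * (V + N * P) :=
    mul_le_mul_of_nonneg_left hV' (mul_nonneg hD0.le (sq_nonneg α))
  have h2 : D * α ^ 2 * U' ≤ D * α ^ 2 * (U + N * P) :=
    mul_le_mul_of_nonneg_left hU' (mul_nonneg hD0.le (sq_nonneg α))
  have hEq : D * (U + α ^ 2 * (V + N * P) + t ^ 2 * (κ.re ^ 2 + κ.im ^ 2) * P + 2 * α * z1.re
        + 2 * t * (κ.re * p.re - κ.im * p.im) + 2 * α * t * (κ.re * q.re + κ.im * q.im))
      + D * (V + α ^ 2 * (U + N * P) + t ^ 2 * (κ.re ^ 2 + κ.im ^ 2) * P + 2 * α * z2.re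
        + 2 * t * (κ.re * q.re + κ.im * q.im) + 2 * α * t * (κ.re * p.re - κ.im * p.im))
      = A * (U + V) + (A - s) * N * P + 2 * (κ.re * κ.re + κ.im * κ.im) / (A + B) * P
        + B * (z1.re + z2.re)
        + 2 * (κ.re * p.re - κ.im * p.im + κ.re * q.re + κ.im * q.im) := by
    linear_combination (U + V) * hDA + N * P * hDa2 + (κ.re ^ 2 + κ.im ^ 2) * P * hDt2
      + (z1.re + z2.re) * hDB
      + 2 * (κ.re * p.re - κ.im * p.im + κ.re * q.re + κ.im * q.im) * hDt
  have hmain : 0 ≤ A * (U + V) + (A - s) * N * P + 2 * (κ.re * κ.re + κ.im * κ.im) / (A + B) * P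
      + B * (z1.re + z2.re)
      + 2 * (κ.re * p.re - κ.im * p.im + κ.re * q.re + κ.im * q.im) := by
    rw [← hEq]
    linarith [hsq, h1, h2]

  rw [hbig, Complex.sq_norm, Complex.normSq_apply]
  simp only [Complex.add_re, Complex.mul_re, Complex.mul_im, Complex.add_im,
    Complex.ofReal_re, Complex.ofReal_im, Complex.conj_re, Complex.conj_im]
  linarith [hmain]
end
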